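/- (Eigenvalues of the counterexample iteration matrix) For every 0 < r < 1, the numbers λ₁(r) = (1 − 1/r) − √(1/r² − 1/r) and λ₂(r) = (1 − 1/r) + √(1/r² − 1/r) are eigenvalues of P(r), i.e., det(P(r) − λ₁(r)·I₂) = 0 and det(P(r) − λ₂(r)·I₂) = 0. In particular, λ₁(3/4) = −1 and λ₂(3/4) = 1/3. -/

import Mathlib

open Matrix

/-- The iteration matrix of CP-PPA with `s = 1` applied to `min{0·x : x = 0, x ∈ ℝ}`. -/
noncomputable def Pmat (r : ℝ) : Matrix (Fin 2) (Fin 2) ℝ :=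
  !![1, 1 / r; -1, 1 - 2 / r]

noncomputable def lam1 (r : ℝ) : ℝ := (1 - 1 / r) - Real.sqrt (1 / r ^ 2 - 1 / r)

noncomputable def lam2 (r : ℝ) : ℝ := (1 - 1 / r) + Real.sqrt (1 / r ^ 2 - 1 / r)

/-- `λ₁(r)` and `λ₂(r)` are eigenvalues of `P(r)` for `0 < r < 1`; moreover
`λ₁(3/4) = −1` and `λ₂(3/4) = 1/3`. -/
theorem stmt_16 :
    (∀ r : ℝ, 0 < r → r < 1 →
      (Pmat r - lam1 r • (1 : Matrix (Fin 2) (Fin 2) ℝ)).det = 0 ∧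
      (Pmat r - lam2 r • (1 : Matrix (Fin 2) (Fin 2) ℝ)).det = 0) ∧
    lam1 (3 / 4) = -1 ∧ lam2 (3 / 4) = 1 / 3 := by
  have h34 : Real.sqrt (1 / (3/4 : ℝ) ^ 2 - 1 / (3/4)) = 2/3 := by
    rw [show (1 / (3/4 : ℝ) ^ 2 - 1 / (3/4)) = (2/3)^2 by norm_num]
    exact Real.sqrt_sq (by norm_num)
  refine ⟨fun r hr hr1 => ?_, by unfold lam1; rw [h34]; norm_num,
    by unfold lam2; rw [h34]; norm_num⟩
  have hd : (0:ℝ) ≤ 1 / r ^ 2 - 1 / r := by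
    rw [sub_nonneg, div_le_div_iff₀ (by positivity) (by positivity)]
    nlinarith
  have hrne : r ≠ 0 := ne_of_gt hr
  set s := Real.sqrt (1 / r ^ 2 - 1 / r) with hs
  have hsq : s ^ 2 * r ^ 2 = 1 - r := by
    have := Real.sq_sqrt hd
    rw [← hs] at this
    field_simp at this
    linear_combination this
  constructor <;>
  · simp only [Pmat, lam1, lam2, ← hs, det_fin_two, Matrix.sub_apply, Matrix.smul_apply,
      Matrix.one_apply, Matrix.cons_val', Matrix.cons_val_zero, Matrix.cons_val_one,
      Matrix.head_cons, Matrix.head_fin_const, Matrix.empty_val', Matrix.cons_val_fin_one,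
      smul_eq_mul, Matrix.of_apply, if_true, zero_ne_one, Fin.one_eq_zero_iff,
      OfNat.ofNat_ne_zero, one_ne_zero, if_false, ite_true, ite_false]
    field_simp
    nlinarith [hsq]
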